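/- Let S = R⟨x₁,…,xₙ; σ, δ⟩ be a free skew extension and C the center of R. If there exists c ∈ C such that cIₙ − σ(c) is invertible in Mₙ(R), then setting y_j = x_j c − c x_j gives elements y₁,…,yₙ such that S is the (σ,0)-free skew extension of R generated by y₁,…,yₙ; in particular r·y_j = Σᵢ yᵢσ_{ij}(r) for all r ∈ R and j. -/

import Mathlib

section SkewAux
variable {R : Type} [Ring R] {n : ℕ}

def wordOf {k : ℕ} (v : Fin k → Fin n) : FreeMonoid (Fin n) :=
  FreeMonoid.ofList (List.ofFn v)

lemma wordOf_zero (v : Fin 0 → Fin n) : wordOf v = 1 := rfl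

lemma wordOf_succ {k : ℕ} (v : Fin (k + 1) → Fin n) :
    wordOf v = FreeMonoid.of (v 0) * wordOf (Fin.tail v) := by
  simp only [wordOf, List.ofFn_succ, FreeMonoid.ofList_cons]; rfl

lemma wordOf_cons {k : ℕ} (j : Fin n) (u : Fin k → Fin n) :
    wordOf (Fin.cons j u) = FreeMonoid.of j * wordOf u := by
  rw [wordOf_succ, Fin.cons_zero, Fin.tail_cons]

lemma length_wordOf {k : ℕ} (v : Fin k → Fin n) :
    FreeMonoid.length (wordOf v) = k := by
  show List.length (List.ofFn v) = k
  exact List.length_ofFn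

lemma wordOf_injective {k : ℕ} :
    Function.Injective (wordOf (n := n) (k := k)) := fun u v h =>
  List.ofFn_injective (FreeMonoid.ofList.injective h)

lemma exists_wordOf (w : FreeMonoid (Fin n)) :
    ∃ v : Fin (FreeMonoid.length w) → Fin n, wordOf v = w := by
  refine ⟨(FreeMonoid.toList w).get, ?_⟩
  simp only [wordOf]
  exact congrArg FreeMonoid.ofList (List.ofFn_get _)

noncomputable def sigmaPow (σ : R →+* Matrix (Fin n) (Fin n) R) :
    (k : ℕ) → R →+* Matrix (Fin k → Fin n) (Fin k → Fin n) R
  | 0 => Matrix.scalar _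
  | k + 1 =>
    ((Matrix.reindexAlgEquiv ℤ R (Fin.consEquiv fun _ => Fin n)).toRingEquiv.toRingHom.comp
      (Matrix.compRingEquiv (Fin n) (Fin k → Fin n) R).toRingHom).comp
      ((sigmaPow σ k).mapMatrix.comp σ)

lemma sigmaPow_zero_apply (σ : R →+* Matrix (Fin n) (Fin n) R) (r : R)
    (u v : Fin 0 → Fin n) : sigmaPow σ 0 r u v = r := by
  have : u = v := Subsingleton.elim _ _
  subst this
  simp [sigmaPow, Matrix.scalar_apply, Matrix.diagonal_apply_eq]

lemma sigmaPow_succ_apply (σ : R →+* Matrix (Fin n) (Fin n) R) (k : ℕ) (r : R)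
    (j l : Fin n) (u v : Fin k → Fin n) :
    sigmaPow σ (k + 1) r (Fin.cons j u) (Fin.cons l v) = sigmaPow σ k (σ r j l) u v := by
  have h1 : (Fin.consEquiv (fun _ : Fin (k+1) => Fin n)).symm (Fin.cons j u) = (j, u) := by
    ext <;> simp [Fin.consEquiv]
  have h2 : (Fin.consEquiv (fun _ : Fin (k+1) => Fin n)).symm (Fin.cons l v) = (l, v) := by
    ext <;> simp [Fin.consEquiv]
  simp [sigmaPow, Matrix.reindex_apply, Matrix.submatrix_apply, h1, h2,
    Matrix.compRingEquiv, Matrix.compAddEquiv, Matrix.comp]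
  rfl

lemma sigmaPow_succ_apply' (σ : R →+* Matrix (Fin n) (Fin n) R) (k : ℕ) (r : R)
    (u v : Fin (k + 1) → Fin n) :
    sigmaPow σ (k + 1) r u v
      = sigmaPow σ k (σ r (u 0) (v 0)) (Fin.tail u) (Fin.tail v) := by
  conv_lhs => rw [← Fin.cons_self_tail u, ← Fin.cons_self_tail v]
  rw [sigmaPow_succ_apply]

variable {S : Type} [Ring S]

def lowGrp (lam : R →+* S) (x : Fin n → S) (k : ℕ) : AddSubgroup S :=
  AddSubgroup.closure
    {s | ∃ w a, FreeMonoid.length w < k ∧ s = FreeMonoid.lift x w * lam a}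

lemma mem_lowGrp (lam : R →+* S) (x : Fin n → S) {k : ℕ} {w : FreeMonoid (Fin n)}
    (h : FreeMonoid.length w < k) (a : R) :
    FreeMonoid.lift x w * lam a ∈ lowGrp lam x k :=
  AddSubgroup.subset_closure ⟨w, a, h, rfl⟩

lemma lowGrp_mono (lam : R →+* S) (x : Fin n → S) {k k' : ℕ} (h : k ≤ k') :
    lowGrp lam x k ≤ lowGrp lam x k' := by
  apply AddSubgroup.closure_mono
  rintro s ⟨w, a, hw, rfl⟩
  exact ⟨w, a, lt_of_lt_of_le hw h, rfl⟩

lemma lowGrp_mul_lam (lam : R →+* S) (x : Fin n → S) {k : ℕ} {z : S}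
    (hz : z ∈ lowGrp lam x k) (b : R) : z * lam b ∈ lowGrp lam x k := by
  induction hz using AddSubgroup.closure_induction with
  | mem s hs =>
      obtain ⟨w, a, hw, rfl⟩ := hs
      rw [mul_assoc, ← map_mul]
      exact mem_lowGrp lam x hw _
  | zero => simpa using (lowGrp lam x k).zero_mem
  | add z₁ z₂ _ _ h1 h2 => rw [add_mul]; exact add_mem h1 h2
  | neg z₁ _ h1 => rw [neg_mul]; exact neg_mem h1

lemma x_mul_lowGrp (lam : R →+* S) (x : Fin n → S) {k : ℕ} (j : Fin n) {z : S}
    (hz : z ∈ lowGrp lam x k) : x j * z ∈ lowGrp lam x (k + 1) := by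
  induction hz using AddSubgroup.closure_induction with
  | mem s hs =>
      obtain ⟨w, a, hw, rfl⟩ := hs
      have : x j * (FreeMonoid.lift x w * lam a)
          = FreeMonoid.lift x (FreeMonoid.of j * w) * lam a := by
        rw [map_mul, FreeMonoid.lift_eval_of, mul_assoc]
      rw [this]
      apply mem_lowGrp
      rw [FreeMonoid.length_mul, FreeMonoid.length_of]
      omega
  | zero => simpa using (lowGrp lam x (k+1)).zero_mem
  | add z₁ z₂ _ _ h1 h2 => rw [mul_add]; exact add_mem h1 h2
  | neg z₁ _ h1 => rw [mul_neg]; exact neg_mem h1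

lemma lam_mul_word (σ : R →+* Matrix (Fin n) (Fin n) R) (δ : R → Fin n → R)
    (lam : R →+* S) (x : Fin n → S)
    (hrel : ∀ (r : R) (j : Fin n),
      lam r * x j = (∑ i, x i * lam (σ r i j)) + lam (δ r j)) :
    ∀ (k : ℕ) (v : Fin k → Fin n) (r : R),
      lam r * FreeMonoid.lift x (wordOf v)
        - ∑ u, FreeMonoid.lift x (wordOf u) * lam (sigmaPow σ k r u v)
        ∈ lowGrp lam x k := by
  intro k
  induction k with
  | zero =>
      intro v r
      rw [Fintype.sum_unique]
      have hd : (default : Fin 0 → Fin n) = v := Subsingleton.elim _ _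
      rw [hd, wordOf_zero, sigmaPow_zero_apply, map_one, mul_one, one_mul, sub_self]
      exact (lowGrp lam x 0).zero_mem
  | succ k IH =>
      intro v r
      set tv := Fin.tail v with htv
      set mxT := FreeMonoid.lift x (wordOf tv) with hmxT
      set L : R → S := fun r' =>
        lam r' * mxT - ∑ u', FreeMonoid.lift x (wordOf u') * lam (sigmaPow σ k r' u' tv)
        with hLdef
      have hLmem : ∀ r', L r' ∈ lowGrp lam x k := fun r' => IH tv r'
      have hL' : ∀ r', lam r' * mxT
          = (∑ u', FreeMonoid.lift x (wordOf u') * lam (sigmaPow σ k r' u' tv)) + L r' := by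
        intro r'; exact eq_add_of_sub_eq' rfl
      have hword : FreeMonoid.lift x (wordOf v) = x (v 0) * mxT := by
        rw [wordOf_succ, map_mul, FreeMonoid.lift_eval_of, hmxT, htv]
      have hlead : ∑ u, FreeMonoid.lift x (wordOf u) * lam (sigmaPow σ (k+1) r u v)
          = ∑ i, ∑ u', x i *
              (FreeMonoid.lift x (wordOf u') * lam (sigmaPow σ k (σ r i (v 0)) u' tv)) := by
        have e2 : (∑ p : Fin n × (Fin k → Fin n), x p.1 *
            (FreeMonoid.lift x (wordOf p.2) * lam (sigmaPow σ k (σ r p.1 (v 0)) p.2 tv)))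
            = ∑ i, ∑ u', x i *
              (FreeMonoid.lift x (wordOf u') * lam (sigmaPow σ k (σ r i (v 0)) u' tv)) :=
          Fintype.sum_prod_type _
        rw [← e2]
        refine (Fintype.sum_equiv (Fin.consEquiv fun _ : Fin (k+1) => Fin n) _ _ ?_).symm
        intro p
        show x p.1 * (FreeMonoid.lift x (wordOf p.2) * lam (sigmaPow σ k (σ r p.1 (v 0)) p.2 tv))
          = FreeMonoid.lift x (wordOf (Fin.cons p.1 p.2))
              * lam (sigmaPow σ (k+1) r (Fin.cons p.1 p.2) v)
        rw [wordOf_cons, map_mul, FreeMonoid.lift_eval_of, mul_assoc,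
          sigmaPow_succ_apply' σ k r (Fin.cons p.1 p.2) v, Fin.cons_zero, Fin.tail_cons, htv]
      have hmain : lam r * FreeMonoid.lift x (wordOf v)
          = (∑ u, FreeMonoid.lift x (wordOf u) * lam (sigmaPow σ (k+1) r u v))
            + ((∑ i, x i * L (σ r i (v 0)))
              + ((∑ u', FreeMonoid.lift x (wordOf u') * lam (sigmaPow σ k (δ r (v 0)) u' tv))
                + L (δ r (v 0)))) := by
        rw [hlead]
        calc lam r * FreeMonoid.lift x (wordOf v)
            = (lam r * x (v 0)) * mxT := by rw [hword, mul_assoc]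
          _ = (∑ i, x i * lam (σ r i (v 0))) * mxT + lam (δ r (v 0)) * mxT := by
              rw [hrel, add_mul]
          _ = (∑ i, x i * (lam (σ r i (v 0)) * mxT)) + lam (δ r (v 0)) * mxT := by
              rw [Finset.sum_mul]
              congr 1
              exact Finset.sum_congr rfl fun i _ => by rw [mul_assoc]
          _ = (∑ i, x i * ((∑ u', FreeMonoid.lift x (wordOf u')
                  * lam (sigmaPow σ k (σ r i (v 0)) u' tv)) + L (σ r i (v 0))))
              + ((∑ u', FreeMonoid.lift x (wordOf u')
                  * lam (sigmaPow σ k (δ r (v 0)) u' tv)) + L (δ r (v 0))) := by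
              rw [← hL']
              congr 1
              exact Finset.sum_congr rfl fun i _ => by rw [← hL']
          _ = (∑ i, ∑ u', x i * (FreeMonoid.lift x (wordOf u')
                  * lam (sigmaPow σ k (σ r i (v 0)) u' tv)))
              + ((∑ i, x i * L (σ r i (v 0)))
                + ((∑ u', FreeMonoid.lift x (wordOf u')
                    * lam (sigmaPow σ k (δ r (v 0)) u' tv)) + L (δ r (v 0)))) := by
              simp only [mul_add, Finset.mul_sum, Finset.sum_add_distrib]
              abel
      rw [hmain, add_sub_cancel_left]
      refine add_mem (sum_mem fun i _ => x_mul_lowGrp lam x i (hLmem _)) (add_mem ?_ ?_)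
      · exact sum_mem fun u' _ => mem_lowGrp lam x (by rw [length_wordOf]; omega) _
      · exact lowGrp_mono lam x (Nat.le_succ k) (hLmem _)

lemma lam_mul_lowGrp (σ : R →+* Matrix (Fin n) (Fin n) R) (δ : R → Fin n → R)
    (lam : R →+* S) (x : Fin n → S)
    (hrel : ∀ (r : R) (j : Fin n),
      lam r * x j = (∑ i, x i * lam (σ r i j)) + lam (δ r j))
    {k : ℕ} {z : S} (hz : z ∈ lowGrp lam x k) (r : R) :
    lam r * z ∈ lowGrp lam x k := by
  induction hz using AddSubgroup.closure_induction with
  | mem s hs =>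
      obtain ⟨w, a, hw, rfl⟩ := hs
      obtain ⟨v, hv⟩ := exists_wordOf w
      have hK := lam_mul_word σ δ lam x hrel (FreeMonoid.length w) v r
      rw [hv] at hK
      have hsplit : lam r * FreeMonoid.lift x w
          = (∑ u, FreeMonoid.lift x (wordOf u) * lam (sigmaPow σ (FreeMonoid.length w) r u v))
            + (lam r * FreeMonoid.lift x w
              - ∑ u, FreeMonoid.lift x (wordOf u) * lam (sigmaPow σ (FreeMonoid.length w) r u v)) :=
        eq_add_of_sub_eq' rfl
      rw [← mul_assoc, hsplit, add_mul, Finset.sum_mul]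
      refine add_mem (sum_mem fun u _ => ?_) ?_
      · rw [mul_assoc, ← map_mul]
        exact mem_lowGrp lam x (by rw [length_wordOf]; omega) _
      · exact lowGrp_mono lam x (le_of_lt hw) (lowGrp_mul_lam lam x hK a)
  | zero => simpa using (lowGrp lam x k).zero_mem
  | add z₁ z₂ _ _ h1 h2 => rw [mul_add]; exact add_mem h1 h2
  | neg z₁ _ h1 => rw [mul_neg]; exact neg_mem h1

noncomputable def Gmat (σ : R →+* Matrix (Fin n) (Fin n) R)
    (A : Matrix (Fin n) (Fin n) R) :
    (k : ℕ) → Matrix (Fin k → Fin n) (Fin k → Fin n) R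
  | 0 => 1
  | k + 1 =>
    (Matrix.reindexAlgEquiv ℤ R (Fin.consEquiv fun _ : Fin (k+1) => Fin n))
      ((Matrix.compRingEquiv (Fin n) (Fin k → Fin n) R)
        ((sigmaPow σ k).mapMatrix A * Matrix.scalar (Fin n) (Gmat σ A k)))

lemma Gmat_zero_apply (σ : R →+* Matrix (Fin n) (Fin n) R) (A : Matrix (Fin n) (Fin n) R)
    (u v : Fin 0 → Fin n) : Gmat σ A 0 u v = 1 := by
  have : u = v := Subsingleton.elim _ _
  subst this
  simp [Gmat, Matrix.one_apply_eq]

lemma Gmat_succ_apply (σ : R →+* Matrix (Fin n) (Fin n) R) (A : Matrix (Fin n) (Fin n) R)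
    (k : ℕ) (j i : Fin n) (u w : Fin k → Fin n) :
    Gmat σ A (k + 1) (Fin.cons j u) (Fin.cons i w)
      = ∑ t, sigmaPow σ k (A j i) u t * Gmat σ A k t w := by
  have h1 : (Fin.consEquiv (fun _ : Fin (k+1) => Fin n)).symm (Fin.cons j u) = (j, u) := by
    ext <;> simp [Fin.consEquiv]
  have h2 : (Fin.consEquiv (fun _ : Fin (k+1) => Fin n)).symm (Fin.cons i w) = (i, w) := by
    ext <;> simp [Fin.consEquiv]
  simp only [Gmat, Matrix.reindexAlgEquiv_apply, Matrix.reindex_apply, Matrix.submatrix_apply,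
    h1, h2, Matrix.compRingEquiv, Matrix.compAddEquiv, Matrix.comp]
  show ((sigmaPow σ k).mapMatrix A * Matrix.scalar (Fin n) (Gmat σ A k)) j i u w = _
  rw [Matrix.mul_apply, Matrix.scalar_apply]
  simp only [Matrix.diagonal_apply, RingHom.mapMatrix_apply, Matrix.map_apply]
  rw [Finset.sum_eq_single i]
  · simp [Matrix.mul_apply]
  · intro b _ hb; simp [hb]
  · simp

lemma Gmat_succ_apply' (σ : R →+* Matrix (Fin n) (Fin n) R) (A : Matrix (Fin n) (Fin n) R)
    (k : ℕ) (u v : Fin (k + 1) → Fin n) :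
    Gmat σ A (k + 1) u v
      = ∑ t, sigmaPow σ k (A (u 0) (v 0)) (Fin.tail u) t * Gmat σ A k t (Fin.tail v) := by
  conv_lhs => rw [← Fin.cons_self_tail u, ← Fin.cons_self_tail v]
  rw [Gmat_succ_apply]

lemma isUnit_Gmat (σ : R →+* Matrix (Fin n) (Fin n) R) {A : Matrix (Fin n) (Fin n) R}
    (hA : IsUnit A) (k : ℕ) : IsUnit (Gmat σ A k) := by
  induction k with
  | zero => exact isUnit_one
  | succ k ih =>
      exact (((hA.map (sigmaPow σ k).mapMatrix).mul
        (ih.map (Matrix.scalar (Fin n)))).map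
          (Matrix.compRingEquiv (Fin n) (Fin k → Fin n) R)).map
          (Matrix.reindexAlgEquiv ℤ R (Fin.consEquiv fun _ : Fin (k+1) => Fin n))

lemma y_mul_lowGrp (σ : R →+* Matrix (Fin n) (Fin n) R) (δ : R → Fin n → R)
    (lam : R →+* S) (x : Fin n → S)
    (hrel : ∀ (r : R) (j : Fin n),
      lam r * x j = (∑ i, x i * lam (σ r i j)) + lam (δ r j))
    (y : Fin n → S) (A : Matrix (Fin n) (Fin n) R) (d : Fin n → R)
    (hy : ∀ j, y j = (∑ i, x i * lam (A i j)) - lam (d j))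
    {k : ℕ} {z : S} (hz : z ∈ lowGrp lam x k) (j : Fin n) :
    y j * z ∈ lowGrp lam x (k + 1) := by
  rw [hy, sub_mul, Finset.sum_mul]
  refine sub_mem (sum_mem fun i _ => ?_) ?_
  · rw [mul_assoc]
    exact x_mul_lowGrp lam x i (lam_mul_lowGrp σ δ lam x hrel hz _)
  · exact lowGrp_mono lam x (Nat.le_succ k) (lam_mul_lowGrp σ δ lam x hrel hz _)

lemma yword_expansion (σ : R →+* Matrix (Fin n) (Fin n) R) (δ : R → Fin n → R)
    (lam : R →+* S) (x : Fin n → S)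
    (hrel : ∀ (r : R) (j : Fin n),
      lam r * x j = (∑ i, x i * lam (σ r i j)) + lam (δ r j))
    (y : Fin n → S) (A : Matrix (Fin n) (Fin n) R) (d : Fin n → R)
    (hy : ∀ j, y j = (∑ i, x i * lam (A i j)) - lam (d j)) :
    ∀ (k : ℕ) (v : Fin k → Fin n) (a : R),
      FreeMonoid.lift y (wordOf v) * lam a
        - ∑ u, FreeMonoid.lift x (wordOf u) * lam (Gmat σ A k u v * a)
        ∈ lowGrp lam x k := by
  intro k
  induction k with
  | zero =>
      intro v a
      rw [Fintype.sum_unique]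
      have hd : (default : Fin 0 → Fin n) = v := Subsingleton.elim _ _
      rw [hd, wordOf_zero, map_one, map_one, Gmat_zero_apply, one_mul, one_mul, one_mul,
        sub_self]
      exact (lowGrp lam x 0).zero_mem
  | succ k IH =>
      intro v a
      set tv := Fin.tail v with htv
      -- decomposition of `lam r' * (monomial of length k)` coming from K1
      have K1bmem : ∀ (r' : R) (t : Fin k → Fin n) (b : R),
          lam r' * (FreeMonoid.lift x (wordOf t) * lam b)
            - ∑ u', FreeMonoid.lift x (wordOf u') * lam (sigmaPow σ k r' u' t * b)
            ∈ lowGrp lam x k := by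
        intro r' t b
        have h := lam_mul_word σ δ lam x hrel k t r'
        have heq : lam r' * (FreeMonoid.lift x (wordOf t) * lam b)
            - ∑ u', FreeMonoid.lift x (wordOf u') * lam (sigmaPow σ k r' u' t * b)
            = (lam r' * FreeMonoid.lift x (wordOf t)
              - ∑ u', FreeMonoid.lift x (wordOf u') * lam (sigmaPow σ k r' u' t)) * lam b := by
          rw [sub_mul, Finset.sum_mul, ← mul_assoc]
          congr 1
          exact Finset.sum_congr rfl fun u' _ => by rw [mul_assoc, ← map_mul]
        rw [heq]
        exact lowGrp_mul_lam lam x h b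
      -- the per-monomial expansion of multiplication by `y (v 0)`
      have step : ∀ (t : Fin k → Fin n) (b : R),
          y (v 0) * (FreeMonoid.lift x (wordOf t) * lam b)
            - ∑ i, ∑ u', x i * (FreeMonoid.lift x (wordOf u')
                * lam (sigmaPow σ k (A i (v 0)) u' t * b))
            ∈ lowGrp lam x (k + 1) := by
        intro t b
        have h1 : y (v 0) * (FreeMonoid.lift x (wordOf t) * lam b)
            = (∑ i, x i * (lam (A i (v 0)) * (FreeMonoid.lift x (wordOf t) * lam b)))
              - lam (d (v 0)) * (FreeMonoid.lift x (wordOf t) * lam b) := by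
          rw [hy, sub_mul, Finset.sum_mul]
          congr 1
          exact Finset.sum_congr rfl fun i _ => by rw [mul_assoc]
        have h2 : ∀ i, lam (A i (v 0)) * (FreeMonoid.lift x (wordOf t) * lam b)
            = (∑ u', FreeMonoid.lift x (wordOf u') * lam (sigmaPow σ k (A i (v 0)) u' t * b))
              + (lam (A i (v 0)) * (FreeMonoid.lift x (wordOf t) * lam b)
                - ∑ u', FreeMonoid.lift x (wordOf u')
                    * lam (sigmaPow σ k (A i (v 0)) u' t * b)) := fun i =>
          eq_add_of_sub_eq' rfl
        have h3 : y (v 0) * (FreeMonoid.lift x (wordOf t) * lam b)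
            = (∑ i, ∑ u', x i * (FreeMonoid.lift x (wordOf u')
                * lam (sigmaPow σ k (A i (v 0)) u' t * b)))
              + ((∑ i, x i * (lam (A i (v 0)) * (FreeMonoid.lift x (wordOf t) * lam b)
                  - ∑ u', FreeMonoid.lift x (wordOf u')
                      * lam (sigmaPow σ k (A i (v 0)) u' t * b)))
                - lam (d (v 0)) * (FreeMonoid.lift x (wordOf t) * lam b)) := by
          rw [h1]
          conv_lhs => rw [Finset.sum_congr rfl fun i _ => by rw [h2 i]]
          simp only [mul_add, Finset.mul_sum, Finset.sum_add_distrib]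
          abel
        rw [h3, add_sub_cancel_left]
        refine sub_mem (sum_mem fun i _ => x_mul_lowGrp lam x i (K1bmem _ t b)) ?_
        exact lam_mul_lowGrp σ δ lam x hrel
          (mem_lowGrp lam x (by rw [length_wordOf]; omega) b) _
      -- leading sum identification
      have hlead : ∑ t, ∑ i, ∑ u', x i * (FreeMonoid.lift x (wordOf u')
            * lam (sigmaPow σ k (A i (v 0)) u' t * (Gmat σ A k t tv * a)))
          = ∑ u, FreeMonoid.lift x (wordOf u) * lam (Gmat σ A (k+1) u v * a) := by
        rw [Finset.sum_comm]
        have hswap : ∀ i, ∑ t, ∑ u', x i * (FreeMonoid.lift x (wordOf u')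
              * lam (sigmaPow σ k (A i (v 0)) u' t * (Gmat σ A k t tv * a)))
            = ∑ u', x i * (FreeMonoid.lift x (wordOf u')
                * lam (Gmat σ A (k+1) (Fin.cons i u') v * a)) := by
          intro i
          rw [Finset.sum_comm]
          refine Finset.sum_congr rfl fun u' _ => ?_
          rw [← Finset.mul_sum, ← Finset.mul_sum, ← map_sum]
          have : ∑ t, sigmaPow σ k (A i (v 0)) u' t * (Gmat σ A k t tv * a)
              = Gmat σ A (k+1) (Fin.cons i u') v * a := by
            rw [Gmat_succ_apply' σ A k (Fin.cons i u') v, Fin.cons_zero, Fin.tail_cons,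
              Finset.sum_mul, htv]
            exact Finset.sum_congr rfl fun t _ => by rw [mul_assoc]
          rw [this]
        conv_lhs => rw [Finset.sum_congr rfl fun i _ => hswap i]
        have e2 : (∑ p : Fin n × (Fin k → Fin n), x p.1 * (FreeMonoid.lift x (wordOf p.2)
              * lam (Gmat σ A (k+1) (Fin.cons p.1 p.2) v * a)))
            = ∑ i, ∑ u', x i * (FreeMonoid.lift x (wordOf u')
                * lam (Gmat σ A (k+1) (Fin.cons i u') v * a)) :=
          Fintype.sum_prod_type _
        rw [← e2]
        refine Fintype.sum_equiv (Fin.consEquiv fun _ : Fin (k+1) => Fin n) _ _ ?_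
        intro p
        show x p.1 * (FreeMonoid.lift x (wordOf p.2)
              * lam (Gmat σ A (k+1) (Fin.cons p.1 p.2) v * a))
          = FreeMonoid.lift x (wordOf (Fin.cons p.1 p.2))
              * lam (Gmat σ A (k+1) (Fin.cons p.1 p.2) v * a)
        rw [wordOf_cons,
          show FreeMonoid.lift x (FreeMonoid.of p.1 * wordOf p.2)
              = x p.1 * FreeMonoid.lift x (wordOf p.2) by
            rw [map_mul, FreeMonoid.lift_eval_of],
          mul_assoc]
      -- assemble
      have hword : FreeMonoid.lift y (wordOf v) * lam a
          = y (v 0) * (FreeMonoid.lift y (wordOf tv) * lam a) := by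
        rw [wordOf_succ, map_mul, FreeMonoid.lift_eval_of, mul_assoc, htv]
      have hexp : FreeMonoid.lift y (wordOf tv) * lam a
          = (∑ t, FreeMonoid.lift x (wordOf t) * lam (Gmat σ A k t tv * a))
            + (FreeMonoid.lift y (wordOf tv) * lam a
              - ∑ t, FreeMonoid.lift x (wordOf t) * lam (Gmat σ A k t tv * a)) :=
        eq_add_of_sub_eq' rfl
      have hstep' : ∀ t : Fin k → Fin n,
          y (v 0) * (FreeMonoid.lift x (wordOf t) * lam (Gmat σ A k t tv * a))
            = (∑ i, ∑ u', x i * (FreeMonoid.lift x (wordOf u')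
                * lam (sigmaPow σ k (A i (v 0)) u' t * (Gmat σ A k t tv * a))))
              + (y (v 0) * (FreeMonoid.lift x (wordOf t) * lam (Gmat σ A k t tv * a))
                - ∑ i, ∑ u', x i * (FreeMonoid.lift x (wordOf u')
                    * lam (sigmaPow σ k (A i (v 0)) u' t * (Gmat σ A k t tv * a)))) :=
        fun t => eq_add_of_sub_eq' rfl
      have hmain : FreeMonoid.lift y (wordOf v) * lam a
          = (∑ u, FreeMonoid.lift x (wordOf u) * lam (Gmat σ A (k+1) u v * a))
            + ((∑ t, (y (v 0) * (FreeMonoid.lift x (wordOf t) * lam (Gmat σ A k t tv * a))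
                - ∑ i, ∑ u', x i * (FreeMonoid.lift x (wordOf u')
                    * lam (sigmaPow σ k (A i (v 0)) u' t * (Gmat σ A k t tv * a)))))
              + y (v 0) * (FreeMonoid.lift y (wordOf tv) * lam a
                - ∑ t, FreeMonoid.lift x (wordOf t) * lam (Gmat σ A k t tv * a))) := by
        rw [← hlead, hword]
        conv_lhs => rw [hexp]
        rw [mul_add, Finset.mul_sum]
        conv_lhs => rw [Finset.sum_congr rfl fun t _ => hstep' t]
        rw [Finset.sum_add_distrib]
        abel
      rw [hmain, add_sub_cancel_left]
      refine add_mem (sum_mem fun t _ => step t _) ?_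
      exact y_mul_lowGrp σ δ lam x hrel y A d hy (IH tv a) (v 0)

noncomputable def Phi (lam : R →+* S) (x : Fin n → S) : (FreeMonoid (Fin n) →₀ R) →+ S :=
  Finsupp.liftAddHom fun w => (AddMonoidHom.mulLeft (FreeMonoid.lift x w)).comp lam.toAddMonoidHom

lemma Phi_apply (lam : R →+* S) (x : Fin n → S) (p : FreeMonoid (Fin n) →₀ R) :
    Phi lam x p = p.sum fun w a => FreeMonoid.lift x w * lam a := rfl

lemma Phi_single (lam : R →+* S) (x : Fin n → S) (w : FreeMonoid (Fin n)) (a : R) :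
    Phi lam x (Finsupp.single w a) = FreeMonoid.lift x w * lam a := by
  rw [Phi_apply]
  exact Finsupp.sum_single_index (by simp)

lemma Phi_eq_sum (lam : R →+* S) (x : Fin n → S) (p : FreeMonoid (Fin n) →₀ R) :
    Phi lam x p = ∑ w ∈ p.support, FreeMonoid.lift x w * lam (p w) := rfl

lemma lowGrp_exists_rep (lam : R →+* S) (x : Fin n → S) (k : ℕ) {z : S}
    (hz : z ∈ lowGrp lam x k) :
    ∃ q : FreeMonoid (Fin n) →₀ R,
      (∀ w ∈ q.support, FreeMonoid.length w < k) ∧ Phi lam x q = z := by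
  classical
  induction hz using AddSubgroup.closure_induction with
  | mem s hs =>
      obtain ⟨w, a, hw, rfl⟩ := hs
      refine ⟨Finsupp.single w a, fun w' hw' => ?_, Phi_single lam x w a⟩
      have := Finsupp.support_single_subset hw'
      simp only [Finset.mem_singleton] at this
      rwa [this]
  | zero => exact ⟨0, by simp, map_zero _⟩
  | add z₁ z₂ _ _ h1 h2 =>
      obtain ⟨q1, hq1, e1⟩ := h1
      obtain ⟨q2, hq2, e2⟩ := h2
      refine ⟨q1 + q2, fun w hw => ?_, by rw [map_add, e1, e2]⟩
      rcases Finset.mem_union.1 (Finsupp.support_add hw) with h | h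
      exacts [hq1 w h, hq2 w h]
  | neg z₁ _ h1 =>
      obtain ⟨q, hq, e⟩ := h1
      exact ⟨-q, fun w hw => hq w (by rwa [Finsupp.support_neg] at hw), by rw [map_neg, e]⟩

lemma yword_mem_low (σ : R →+* Matrix (Fin n) (Fin n) R) (δ : R → Fin n → R)
    (lam : R →+* S) (x : Fin n → S)
    (hrel : ∀ (r : R) (j : Fin n),
      lam r * x j = (∑ i, x i * lam (σ r i j)) + lam (δ r j))
    (y : Fin n → S) (A : Matrix (Fin n) (Fin n) R) (d : Fin n → R)
    (hy : ∀ j, y j = (∑ i, x i * lam (A i j)) - lam (d j))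
    {w : FreeMonoid (Fin n)} {k : ℕ} (hk : FreeMonoid.length w < k) (a : R) :
    FreeMonoid.lift y w * lam a ∈ lowGrp lam x k := by
  obtain ⟨v, hv⟩ := exists_wordOf w
  have h2 := yword_expansion σ δ lam x hrel y A d hy (FreeMonoid.length w) v a
  rw [hv] at h2
  have hsplit : FreeMonoid.lift y w * lam a
      = (∑ u, FreeMonoid.lift x (wordOf u) * lam (Gmat σ A (FreeMonoid.length w) u v * a))
        + (FreeMonoid.lift y w * lam a
          - ∑ u, FreeMonoid.lift x (wordOf u) * lam (Gmat σ A (FreeMonoid.length w) u v * a)) :=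
    eq_add_of_sub_eq' rfl
  rw [hsplit]
  refine add_mem (sum_mem fun u _ => mem_lowGrp lam x (by rw [length_wordOf]; omega) _) ?_
  exact lowGrp_mono lam x (le_of_lt hk) h2

lemma exists_wordOf_of_length {w : FreeMonoid (Fin n)} {k : ℕ}
    (h : FreeMonoid.length w = k) : ∃ v : Fin k → Fin n, wordOf v = w := by
  subst h; exact exists_wordOf w

set_option maxHeartbeats 1000000 in
lemma phiY_injective_aux (σ : R →+* Matrix (Fin n) (Fin n) R) (δ : R → Fin n → R)
    (lam : R →+* S) (x : Fin n → S)
    (hrel : ∀ (r : R) (j : Fin n),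
      lam r * x j = (∑ i, x i * lam (σ r i j)) + lam (δ r j))
    (y : Fin n → S) (A : Matrix (Fin n) (Fin n) R) (d : Fin n → R)
    (hy : ∀ j, y j = (∑ i, x i * lam (A i j)) - lam (d j))
    (hA : IsUnit A)
    (hxinj : Function.Injective (Phi lam x)) :
    ∀ (k : ℕ) (p : FreeMonoid (Fin n) →₀ R),
      (∀ w ∈ p.support, FreeMonoid.length w < k) → Phi lam y p = 0 → p = 0 := by
  intro k
  induction k with
  | zero =>
      intro p hp _
      ext w
      by_contra hw
      exact absurd (hp w (Finsupp.mem_support_iff.2 hw)) (by omega)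
  | succ k IH =>
      intro p hp h0
      classical
      set p1 := p.filter (fun w => FreeMonoid.length w = k) with hp1def
      set p2 := p.filter (fun w => ¬ FreeMonoid.length w = k) with hp2def
      have hsplit : p1 + p2 = p := Finsupp.filter_pos_add_filter_neg p _
      set g : (Fin k → Fin n) → R :=
        fun u => ∑ v, Gmat σ A k u v * p (wordOf v) with hgdef
      have hp1sum : Phi lam y p1
          = ∑ v : Fin k → Fin n, FreeMonoid.lift y (wordOf v) * lam (p (wordOf v)) := by
        rw [Phi_eq_sum]
        have hsub : p1.support ⊆ Finset.univ.image (wordOf (n := n) (k := k)) := by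
          intro w hw
          rw [hp1def, Finsupp.support_filter, Finset.mem_filter] at hw
          obtain ⟨v, hv⟩ := exists_wordOf_of_length hw.2
          exact Finset.mem_image.2 ⟨v, Finset.mem_univ v, hv⟩
        rw [Finset.sum_subset hsub (fun w _ hnw => by
          rw [Finsupp.notMem_support_iff.1 hnw, map_zero, mul_zero])]
        rw [Finset.sum_image (fun u _ v _ h => wordOf_injective h)]
        refine Finset.sum_congr rfl fun v _ => ?_
        rw [hp1def, Finsupp.filter_apply, if_pos (length_wordOf v)]
      have hp1' : Phi lam y p1
            - ∑ u, FreeMonoid.lift x (wordOf u) * lam (g u) ∈ lowGrp lam x k := by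
        have hmem : (∑ v : Fin k → Fin n,
            (FreeMonoid.lift y (wordOf v) * lam (p (wordOf v))
              - ∑ u, FreeMonoid.lift x (wordOf u) * lam (Gmat σ A k u v * p (wordOf v))))
            ∈ lowGrp lam x k :=
          sum_mem fun v _ => yword_expansion σ δ lam x hrel y A d hy k v (p (wordOf v))
        have heq : (∑ v : Fin k → Fin n,
            (FreeMonoid.lift y (wordOf v) * lam (p (wordOf v))
              - ∑ u, FreeMonoid.lift x (wordOf u) * lam (Gmat σ A k u v * p (wordOf v))))
            = (∑ v : Fin k → Fin n, FreeMonoid.lift y (wordOf v) * lam (p (wordOf v)))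
              - ∑ u, FreeMonoid.lift x (wordOf u) * lam (g u) := by
          rw [Finset.sum_sub_distrib]
          congr 1
          rw [Finset.sum_comm]
          refine Finset.sum_congr rfl fun u _ => ?_
          rw [hgdef, ← Finset.mul_sum, ← map_sum]
        rw [hp1sum, ← heq]
        exact hmem
      have hp2mem : Phi lam y p2 ∈ lowGrp lam x k := by
        rw [Phi_eq_sum]
        refine sum_mem fun w hw => ?_
        rw [hp2def, Finsupp.support_filter, Finset.mem_filter] at hw
        have hlen : FreeMonoid.length w < k + 1 := hp w hw.1
        exact yword_mem_low σ δ lam x hrel y A d hy (by omega) _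
      have h12 : Phi lam y p1 + Phi lam y p2 = 0 := by rw [← map_add, hsplit, h0]
      have hT : (∑ u, FreeMonoid.lift x (wordOf u) * lam (g u)) ∈ lowGrp lam x k := by
        have heq2 : (∑ u, FreeMonoid.lift x (wordOf u) * lam (g u))
            = Phi lam y p1
              - (Phi lam y p1 - ∑ u, FreeMonoid.lift x (wordOf u) * lam (g u)) := by abel
        rw [heq2]
        refine sub_mem ?_ hp1'
        rw [eq_neg_of_add_eq_zero_left h12]
        exact neg_mem hp2mem
      obtain ⟨q, hqlen, hqe⟩ := lowGrp_exists_rep lam x k hT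
      have hq2 : Phi lam x (∑ u, Finsupp.single (wordOf u) (g u)) = Phi lam x q := by
        rw [map_sum, hqe]
        exact Finset.sum_congr rfl fun u _ => Phi_single lam x _ _
      have hqq := hxinj hq2
      have hg0 : ∀ u, g u = 0 := by
        intro u0
        have h1 : (∑ u, Finsupp.single (wordOf u) (g u)) (wordOf u0) = g u0 := by
          rw [Finsupp.finset_sum_apply]
          rw [Finset.sum_eq_single u0]
          · exact Finsupp.single_eq_same
          · exact fun b _ hb =>
              Finsupp.single_eq_of_ne' (fun h => hb (wordOf_injective h))
          · simp
        have h2 : q (wordOf u0) = 0 := by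
          by_contra hne
          exact absurd (hqlen _ (Finsupp.mem_support_iff.2 hne))
            (by rw [length_wordOf]; omega)
        rw [hqq, h2] at h1
        exact h1.symm
      have hvec : ∀ v : Fin k → Fin n, p (wordOf v) = 0 := by
        obtain ⟨Gu, hGu⟩ := isUnit_Gmat σ hA k
        obtain ⟨Bm, hB2⟩ : ∃ Bm : Matrix (Fin k → Fin n) (Fin k → Fin n) R,
            Bm * Gmat σ A k = 1 :=
          ⟨Units.val Gu⁻¹, by rw [← hGu]; exact Gu.inv_mul⟩
        intro v
        have hone : p (wordOf v) = ∑ w, (Bm * Gmat σ A k) v w * p (wordOf w) := by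
          rw [hB2]
          simp [Matrix.one_apply, ite_mul, Finset.sum_ite_eq]
        have h2 : ∑ w, (Bm * Gmat σ A k) v w * p (wordOf w) = ∑ u, Bm v u * g u := by
          simp only [Matrix.mul_apply, Finset.sum_mul]
          rw [Finset.sum_comm]
          refine Finset.sum_congr rfl fun u _ => ?_
          rw [hgdef, Finset.mul_sum]
          exact Finset.sum_congr rfl fun w _ => by rw [mul_assoc]
        rw [hone, h2]
        simp [hg0]
      have hp1z : p1 = 0 := by
        ext w
        rw [hp1def, Finsupp.filter_apply]
        split_ifs with h
        · obtain ⟨v, hv⟩ := exists_wordOf_of_length h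
          rw [← hv, hvec v]
          rfl
        · rfl
      have hp2p : p2 = p := by rw [← hsplit, hp1z, zero_add]
      have hz2 : p2 = 0 := by
        refine IH p2 (fun w hw => ?_) (by rw [hp2p]; exact h0)
        rw [hp2def, Finsupp.support_filter, Finset.mem_filter] at hw
        have := hp w hw.1
        omega
      rw [← hp2p, hz2]

lemma phiY_surjective_aux (σ : R →+* Matrix (Fin n) (Fin n) R)
    (lam : R →+* S) (x : Fin n → S) (y : Fin n → S)
    (B : Matrix (Fin n) (Fin n) R) (e : Fin n → R)
    (hxy : ∀ i, x i = (∑ j, y j * lam (B j i)) + lam (e i))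
    (hycom : ∀ (r : R) (j : Fin n), lam r * y j = ∑ i, y i * lam (σ r i j))
    (hxsurj : Function.Surjective (Phi lam x)) :
    Function.Surjective (Phi lam y) := by
  set M := (Phi lam y).range with hM
  have hy_mem : ∀ (w : FreeMonoid (Fin n)) (a : R),
      FreeMonoid.lift y w * lam a ∈ M := fun w a =>
    ⟨Finsupp.single w a, Phi_single lam y w a⟩
  have hymul : ∀ (j : Fin n) {z : S}, z ∈ M → y j * z ∈ M := by
    rintro j z ⟨p, rfl⟩
    rw [Phi_eq_sum, Finset.mul_sum]
    refine sum_mem fun w _ => ?_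
    have : y j * (FreeMonoid.lift y w * lam (p w))
        = FreeMonoid.lift y (FreeMonoid.of j * w) * lam (p w) := by
      rw [map_mul, FreeMonoid.lift_eval_of, mul_assoc]
    rw [this]
    exact hy_mem _ _
  have hlam_mono : ∀ (w : FreeMonoid (Fin n)) (r a : R),
      lam r * (FreeMonoid.lift y w * lam a) ∈ M := by
    intro w
    induction w using FreeMonoid.inductionOn' with
    | one =>
        intro r a
        rw [map_one, one_mul, ← map_mul]
        have := hy_mem 1 (r * a)
        rwa [map_one, one_mul] at this
    | of_mul j w IH =>
        intro r a
        have h1 : FreeMonoid.lift y (FreeMonoid.of j * w) * lam a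
            = y j * (FreeMonoid.lift y w * lam a) := by
          rw [map_mul, FreeMonoid.lift_eval_of, mul_assoc]
        rw [h1, ← mul_assoc, hycom, Finset.sum_mul]
        refine sum_mem fun i _ => ?_
        rw [mul_assoc]
        exact hymul i (IH _ _)
  have hlam_mul : ∀ {z : S}, z ∈ M → ∀ (r : R), lam r * z ∈ M := by
    rintro z ⟨p, rfl⟩ r
    rw [Phi_eq_sum, Finset.mul_sum]
    exact sum_mem fun w _ => hlam_mono w r (p w)
  have hx_mul : ∀ (i : Fin n) {z : S}, z ∈ M → x i * z ∈ M := by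
    intro i z hz
    rw [hxy i, add_mul, Finset.sum_mul]
    refine add_mem (sum_mem fun j _ => ?_) (hlam_mul hz _)
    rw [mul_assoc]
    exact hymul j (hlam_mul hz _)
  have hxword : ∀ (w : FreeMonoid (Fin n)) (a : R),
      FreeMonoid.lift x w * lam a ∈ M := by
    intro w
    induction w using FreeMonoid.inductionOn' with
    | one =>
        intro a
        rw [map_one, one_mul]
        have := hy_mem 1 a
        rwa [map_one, one_mul] at this
    | of_mul j w IH =>
        intro a
        rw [map_mul, FreeMonoid.lift_eval_of, mul_assoc]
        exact hx_mul j (IH a)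
  intro s
  obtain ⟨p, rfl⟩ := hxsurj s
  have : Phi lam x p ∈ M := by
    rw [Phi_eq_sum]
    exact sum_mem fun w _ => hxword w _
  exact this

end SkewAux



/-- `δ : R → Rⁿ` is a right `σ`-derivation: additive and
`δ(rs) = δ(r)σ(s) + rδ(s)` (row-by-matrix multiplication componentwise). -/
def IsRightSigmaDeriv {R : Type} [Ring R] {n : ℕ}
    (σ : R →+* Matrix (Fin n) (Fin n) R) (δ : R → Fin n → R) : Prop :=
  (∀ r s : R, δ (r + s) = δ r + δ s) ∧
  ∀ (r s : R) (j : Fin n), δ (r * s) j = (∑ i, δ r i * σ s i j) + r * δ s j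

/-- `S` (an `R`-ring via `lam`) together with `x₁,…,xₙ` is a `(σ,δ)`-free skew
extension of `R`: the multiplicative submonoid generated by the `xᵢ` is free on them
(the induced monoid homomorphism from the free monoid on `n` letters is injective),
`S` is a free right `R`-module with basis the set of monomials in the `xᵢ`
(every element of `S` is uniquely a finite sum `Σ_w w·a_w`), and the commutation
rule `r·x_j = Σᵢ xᵢσ_{ij}(r) + δ_j(r)` holds. -/
def IsSkewFreeExt {R : Type} [Ring R] {n : ℕ}
    (σ : R →+* Matrix (Fin n) (Fin n) R) (δ : R → Fin n → R)
    (S : Type) [Ring S] (lam : R →+* S) (x : Fin n → S) : Prop :=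
  Function.Injective (FreeMonoid.lift x) ∧
  Function.Bijective (fun c : FreeMonoid (Fin n) →₀ R =>
    c.sum fun w a => FreeMonoid.lift x w * lam a) ∧
  ∀ (r : R) (j : Fin n), lam r * x j = (∑ i, x i * lam (σ r i j)) + lam (δ r j)

/-- If `c` is central in `R` and `cIₙ − σ(c)` is invertible in `Mₙ(R)`, then with
`y_j = x_j·c − c·x_j` the ring `S` is the `(σ,0)`-free skew extension of `R`
generated by `y₁,…,yₙ`; in particular `r·y_j = Σᵢ yᵢσ_{ij}(r)` for all `r, j`. -/
theorem skewFreeExt_kill_derivation {R : Type} [Ring R] {n : ℕ}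
    (σ : R →+* Matrix (Fin n) (Fin n) R) (δ : R → Fin n → R)
    (hδ : IsRightSigmaDeriv σ δ)
    (S : Type) [Ring S] (lam : R →+* S) (x : Fin n → S)
    (hS : IsSkewFreeExt σ δ S lam x)
    (c : R) (hc : ∀ t : R, c * t = t * c)
    (hinv : IsUnit (c • (1 : Matrix (Fin n) (Fin n) R) - σ c)) :
    IsSkewFreeExt σ (fun _ _ => (0 : R)) S lam
      (fun j => x j * lam c - lam c * x j) ∧
    ∀ (r : R) (j : Fin n),
      lam r * (x j * lam c - lam c * x j)
        = ∑ i, (x i * lam c - lam c * x i) * lam (σ r i j) := by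
  obtain ⟨hxinj0, hxbij0, hxrel⟩ := hS
  set y : Fin n → S := fun j => x j * lam c - lam c * x j with hydef
  set A : Matrix (Fin n) (Fin n) R := c • (1 : Matrix (Fin n) (Fin n) R) - σ c with hAdef
  have hPhiX : (fun p : FreeMonoid (Fin n) →₀ R =>
      p.sum fun w a => FreeMonoid.lift x w * lam a) = ⇑(Phi lam x) :=
    funext fun p => (Phi_apply lam x p).symm
  rw [hPhiX] at hxbij0
  -- entries of A
  have hA1 : ∀ i j, A i j = (if i = j then c else 0) - σ c i j := by
    intro i j
    rw [hAdef, Matrix.sub_apply, Matrix.smul_apply, Matrix.one_apply, smul_eq_mul]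
    split_ifs <;> simp
  -- y in terms of x with leading matrix A
  have hsum1 : ∀ j, (∑ i, x i * lam (A i j)) = x j * lam c - ∑ i, x i * lam (σ c i j) := by
    intro j
    have h1 : ∀ i, x i * lam (A i j)
        = (if i = j then x i * lam c else 0) - x i * lam (σ c i j) := by
      intro i
      rw [hA1, map_sub, mul_sub]
      congr 1
      split_ifs <;> simp
    rw [Finset.sum_congr rfl fun i _ => h1 i, Finset.sum_sub_distrib]
    congr 1
    simp
  have hyA : ∀ j, y j = (∑ i, x i * lam (A i j)) - lam (δ c j) := by
    intro j
    rw [hsum1]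
    show x j * lam c - lam c * x j = _
    rw [hxrel c j]
    abel
  -- the inverse matrix B and the x-in-terms-of-y expression
  obtain ⟨Au, hAu⟩ := hinv
  have hAB : A * Units.val Au⁻¹ = 1 := by rw [← hAu]; exact Au.mul_inv
  set B : Matrix (Fin n) (Fin n) R := Units.val Au⁻¹ with hBdef
  have hxy : ∀ i, x i = (∑ j, y j * lam (B j i)) + lam (∑ j, δ c j * B j i) := by
    intro i
    have h1 : ∑ j, y j * lam (B j i)
        = (∑ j, ∑ m, x m * lam (A m j * B j i)) - lam (∑ j, δ c j * B j i) := by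
      rw [Finset.sum_congr rfl fun j (_ : j ∈ Finset.univ) => by
        rw [hyA j, sub_mul, Finset.sum_mul, Finset.sum_congr rfl fun m _ => by
          rw [mul_assoc, ← map_mul], ← map_mul]]
      rw [Finset.sum_sub_distrib, map_sum]
    have h2 : ∑ j, ∑ m, x m * lam (A m j * B j i)
        = ∑ m, x m * lam ((A * B) m i) := by
      rw [Finset.sum_comm]
      refine Finset.sum_congr rfl fun m _ => ?_
      rw [← Finset.mul_sum, ← map_sum, Matrix.mul_apply]
    have h3 : ∑ m, x m * lam ((A * B) m i) = x i := by
      rw [hBdef, hAB]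
      have : ∀ m, x m * lam ((1 : Matrix (Fin n) (Fin n) R) m i)
          = if m = i then x m else 0 := by
        intro m
        rw [Matrix.one_apply]
        split_ifs <;> simp
      rw [Finset.sum_congr rfl fun m _ => this m]
      simp
    rw [h1, h2, h3]
    abel
  -- the commutation rule for y
  have hcomm : ∀ t : R, lam t * lam c = lam c * lam t := fun t => by
    rw [← map_mul, ← map_mul, ← hc t]
  have hycom : ∀ (r : R) (j : Fin n), lam r * y j = ∑ i, y i * lam (σ r i j) := by
    intro r j
    have lhs : lam r * y j
        = ((∑ i, x i * (lam (σ r i j) * lam c)) + lam (δ r j) * lam c)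
          - ((∑ i, lam c * (x i * lam (σ r i j))) + lam c * lam (δ r j)) := by
      show lam r * (x j * lam c - lam c * x j) = _
      rw [mul_sub]
      congr 1
      · rw [← mul_assoc, hxrel, add_mul, Finset.sum_mul]
        congr 1
        exact Finset.sum_congr rfl fun i _ => by rw [mul_assoc]
      · rw [← mul_assoc, ← map_mul, show r * c = c * r from (hc r).symm, map_mul,
          mul_assoc, hxrel, mul_add, Finset.mul_sum]
    have rhs : ∑ i, y i * lam (σ r i j)
        = (∑ i, x i * (lam c * lam (σ r i j))) - ∑ i, lam c * (x i * lam (σ r i j)) := by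
      rw [← Finset.sum_sub_distrib]
      refine Finset.sum_congr rfl fun i _ => ?_
      show (x i * lam c - lam c * x i) * lam (σ r i j) = _
      rw [sub_mul, mul_assoc, mul_assoc]
    rw [lhs, rhs, hcomm (δ r j)]
    rw [Finset.sum_congr rfl fun i (_ : i ∈ Finset.univ) => by rw [hcomm (σ r i j)]]
    abel
  -- bijectivity of the y-monomial map
  have hybij : Function.Bijective (Phi lam y) := by
    constructor
    · rw [injective_iff_map_eq_zero]
      intro p hp
      exact phiY_injective_aux σ δ lam x hxrel y A (δ c) hyA ⟨Au, hAu⟩ hxbij0.injective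
        ((p.support.sup FreeMonoid.length) + 1) p
        (fun w hw => Nat.lt_succ_of_le (Finset.le_sup hw)) hp
    · exact phiY_surjective_aux σ lam x y B (fun i => ∑ j, δ c j * B j i)
        hxy hycom hxbij0.surjective
  have hyliftinj : Function.Injective (FreeMonoid.lift y) := by
    by_cases hn : n = 0
    · subst hn
      intro w v _
      have hall : ∀ u : FreeMonoid (Fin 0), u = 1 := by
        intro u
        induction u using FreeMonoid.inductionOn' with
        | one => rfl
        | of_mul b a _ => exact b.elim0
      rw [hall w, hall v]
    · have h10 : (1 : R) ≠ 0 := by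
        intro h10
        have hr : ∀ r : R, r = 0 := fun r => by rw [← mul_one r, h10, mul_zero]
        have hsub : ∀ z z' : S, z = z' := by
          intro z z'
          obtain ⟨pz, hz⟩ := hxbij0.surjective z
          obtain ⟨pz', hz'⟩ := hxbij0.surjective z'
          rw [← hz, ← hz']
          congr 1
          ext w
          rw [hr (pz w), hr (pz' w)]
        have hi : Fin n := ⟨0, Nat.pos_of_ne_zero hn⟩
        have heq := hxinj0 (hsub (FreeMonoid.lift x (FreeMonoid.of hi)) (FreeMonoid.lift x 1))
        have : FreeMonoid.length (FreeMonoid.of hi) = FreeMonoid.length (1 : FreeMonoid (Fin n)) := by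
          rw [heq]
        rw [FreeMonoid.length_of, FreeMonoid.length_one] at this
        omega
      intro w v hwv
      have h1 : Phi lam y (Finsupp.single w 1) = Phi lam y (Finsupp.single v 1) := by
        rw [Phi_single, Phi_single, map_one, mul_one, mul_one, hwv]
      exact (Finsupp.single_left_inj h10).1 (hybij.injective h1)
  refine ⟨⟨hyliftinj, ?_, ?_⟩, fun r j => hycom r j⟩
  · have : (fun p : FreeMonoid (Fin n) →₀ R =>
        p.sum fun w a => FreeMonoid.lift y w * lam a) = ⇑(Phi lam y) :=
      funext fun p => (Phi_apply lam y p).symm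
    rw [this]
    exact hybij
  · intro r j
    simp only [map_zero, add_zero]
    exact hycom r j
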